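/- arXiv:0909.1466 — 7 statements merged into one kernel-verified Lean document; each statement's English description precedes it below -/
import Mathlib

section
/- For any function φ : {0,1}^n → ℂ, any index i ∈ [n], and any subset S ⊆ {0,1}^{n-1}, the controlled bit-flip operator E_{i,S} (which maps |x⟩ to |x ⊕ e_i⟩ if the string x with its i-th bit deleted lies in S, and fixes |x⟩ otherwise) satisfies |⟨φ, E_{i,S} φ⟩ − ⟨φ,φ⟩| ≤ 2^{n−1}·I_i(φ), where I_i(φ) = E_{x∈{0,1}^n} |φ(x) − φ(x ⊕ e_i)|². -/
open scoped BigOperators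
open Complex

/-- Strings in `{0,1}^n`. -/
abbrev Bn (n : ℕ) := Fin n → Bool

/-- Hermitian inner product `⟨h,g⟩ = ∑ x, h(x)* g(x)` on functions `{0,1}^n → ℂ`. -/
noncomputable def ip {n : ℕ} (h g : Bn n → ℂ) : ℂ :=
  ∑ x : Bn n, (starRingEnd ℂ) (h x) * g x

/-- Flip the `i`-th bit of `x`. -/
def bflip {n : ℕ} (i : Fin n) (x : Bn n) : Bn n := Function.update x i (!x i)

/-- Controlled bit flip `E_{i,S}`. The control set `S ⊆ {0,1}^{n-1}` is encoded as an
`i`-invariant set of full strings (membership not depending on bit `i`). -/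
def ctrlX {n : ℕ} (i : Fin n) (S : Finset (Bn n)) (g : Bn n → ℂ) : Bn n → ℂ :=
  fun x => if x ∈ S then g (bflip i x) else g x

/-- `E_{i,{j}}`: flip bit `i` exactly when all other coordinates agree with `q`. -/
def ctrlXpt {n : ℕ} (i : Fin n) (q : Bn n) (g : Bn n → ℂ) : Bn n → ℂ :=
  fun x => if ∀ j, j ≠ i → x j = q j then g (bflip i x) else g x

/-- Influence `I_i(φ) = E_x |φ(x) - φ(x ⊕ e_i)|²`. -/
noncomputable def infl {n : ℕ} (i : Fin n) (φ : Bn n → ℂ) : ℝ :=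
  (∑ x : Bn n, ‖φ x - φ (bflip i x)‖ ^ 2) / 2 ^ n


lemma bflip_invol {n : ℕ} (i : Fin n) : Function.Involutive (bflip i) := by
  intro x
  funext j
  by_cases h : j = i
  · subst h; simp [bflip]
  · simp [bflip, Function.update_of_ne h]

/-- `|⟨φ, E_{i,S} φ⟩ - ⟨φ,φ⟩| ≤ 2^{n-1} I_i(φ)`. -/
theorem stmt0 {n : ℕ} (φ : Bn n → ℂ) (i : Fin n) (S : Finset (Bn n))
    (hS : ∀ x, bflip i x ∈ S ↔ x ∈ S) :
    ‖ip φ (ctrlX i S φ) - ip φ φ‖ ≤ 2 ^ (n - 1) * infl i φ := by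
  set F : Bn n → ℂ := fun x => (starRingEnd ℂ) (φ x) * (φ (bflip i x) - φ x) with hF
  have key : ip φ (ctrlX i S φ) - ip φ φ = ∑ x ∈ S, F x := by
    rw [← Finset.univ_inter S, ← Finset.sum_ite_mem]
    unfold ip ctrlX
    rw [← Finset.sum_sub_distrib]
    refine Finset.sum_congr rfl fun x _ => ?_
    by_cases h : x ∈ S <;> simp [h, hF] <;> ring
  -- reindexing
  have e : Bn n ≃ Bn n := (bflip_invol i).toPerm _
  have reind : ∑ x ∈ S, F x = ∑ x ∈ S, F (bflip i x) := by
    refine Finset.sum_equiv ((bflip_invol i).toPerm _) (fun x => (hS x).symm) (fun x _ => ?_)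
    simp [Function.Involutive.coe_toPerm, bflip_invol i x]
  have pt : ∀ x : Bn n, F x + F (bflip i x)
      = -((‖φ x - φ (bflip i x)‖ ^ 2 : ℝ) : ℂ) := by
    intro x
    have h1 : (φ x - φ (bflip i x)) * (starRingEnd ℂ) (φ x - φ (bflip i x))
        = ((Complex.normSq (φ x - φ (bflip i x)) : ℝ) : ℂ) := Complex.mul_conj _
    rw [← Complex.sq_norm] at h1
    simp only [hF]
    rw [bflip_invol i x, ← h1, map_sub]
    ring
  set A : ℝ := ∑ x ∈ S, ‖φ x - φ (bflip i x)‖ ^ 2 with hA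
  have sumF : ∑ x ∈ S, F x = -((A / 2 : ℝ) : ℂ) := by
    have h2 : (2 : ℂ) * ∑ x ∈ S, F x = -((A : ℝ) : ℂ) := by
      rw [two_mul]
      nth_rewrite 2 [reind]
      rw [← Finset.sum_add_distrib]
      rw [hA]
      push_cast
      rw [← Finset.sum_neg_distrib]
      refine Finset.sum_congr rfl fun x _ => ?_
      rw [pt x]; push_cast; ring
    field_simp at h2 ⊢
    push_cast
    linear_combination (1/2 : ℂ) * h2
  have hAnonneg : 0 ≤ A := Finset.sum_nonneg fun x _ => sq_nonneg _
  have hAle : A ≤ ∑ x : Bn n, ‖φ x - φ (bflip i x)‖ ^ 2 :=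
    Finset.sum_le_sum_of_subset_of_nonneg (Finset.subset_univ S)
      (fun x _ _ => sq_nonneg _)
  rw [key, sumF, norm_neg, Complex.norm_real, Real.norm_eq_abs,
    _root_.abs_of_nonneg (show (0:ℝ) ≤ A / 2 by positivity)]
  have hn : (2:ℝ) ^ n = 2 ^ (n-1) * 2 := by
    rw [← pow_succ, Nat.sub_add_cancel i.pos]
  rw [infl, hn]
  set T : ℝ := ∑ x : Bn n, ‖φ x - φ (bflip i x)‖ ^ 2 with hT
  have h3 : (2:ℝ) ^ (n-1) * (T / (2 ^ (n-1) * 2)) = T / 2 := by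
    have : (2:ℝ) ^ (n-1) ≠ 0 := by positivity
    field_simp
  rw [h3]
  linarith
end

section
/- More generally, for any two functions h, g : {0,1}^n → ℂ, any i ∈ [n] and any S ⊆ {0,1}^{n-1}, |⟨h, E_{i,S} g⟩ − ⟨h, g⟩| ≤ √(2^{n−1} I_i(h)) · √(2^{n−1} I_i(g)). -/
open scoped BigOperators
open Complex

/-- `|⟨h, E_{i,S} g⟩ - ⟨h,g⟩| ≤ √(2^{n-1} I_i(h)) · √(2^{n-1} I_i(g))`. -/
theorem stmt1 {n : ℕ} (h g : Bn n → ℂ) (i : Fin n) (S : Finset (Bn n))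
    (hS : ∀ x, bflip i x ∈ S ↔ x ∈ S) :
    ‖ip h (ctrlX i S g) - ip h g‖ ≤
      Real.sqrt (2 ^ (n - 1) * infl i h) * Real.sqrt (2 ^ (n - 1) * infl i g) := by
  have hinv := bflip_invol i
  set A := ∑ x : Bn n, ‖h x - h (bflip i x)‖ ^ 2 with hA
  set B := ∑ x : Bn n, ‖g x - g (bflip i x)‖ ^ 2 with hB
  have hA0 : 0 ≤ A := Finset.sum_nonneg fun x _ => by positivity
  have hB0 : 0 ≤ B := Finset.sum_nonneg fun x _ => by positivity
  obtain ⟨m, rfl⟩ : ∃ m, n = m + 1 := ⟨n - 1, (Nat.succ_pred_eq_of_pos i.pos).symm⟩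
  have hRHS : Real.sqrt (2 ^ (m + 1 - 1) * infl i h) * Real.sqrt (2 ^ (m + 1 - 1) * infl i g)
      = Real.sqrt A * Real.sqrt B / 2 := by
    have h1 : (2:ℝ) ^ (m + 1 - 1) * infl i h = A / 2 := by
      simp only [infl, ← hA, Nat.add_sub_cancel, pow_succ]
      field_simp
      simp only [hA, pow_two]
    have h2 : (2:ℝ) ^ (m + 1 - 1) * infl i g = B / 2 := by
      simp only [infl, ← hB, Nat.add_sub_cancel, pow_succ]
      field_simp
      simp only [hB, pow_two]
    have h4 : Real.sqrt 4 = 2 := by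
      rw [show (4:ℝ) = 2 ^ 2 by norm_num, Real.sqrt_sq (by norm_num)]
    rw [h1, h2, ← Real.sqrt_mul (by positivity),
      show A / 2 * (B / 2) = A * B / 4 by ring,
      Real.sqrt_div (by positivity), h4, Real.sqrt_mul hA0]
  rw [hRHS]
  -- rewrite the LHS difference as a sum over S
  have hT : ip h (ctrlX i S g) - ip h g
      = ∑ x ∈ S, (starRingEnd ℂ) (h x) * (g (bflip i x) - g x) := by
    unfold ip ctrlX
    rw [← Finset.sum_sub_distrib]
    calc ∑ x : Bn (m+1), ((starRingEnd ℂ) (h x) * (if x ∈ S then g (bflip i x) else g x)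
            - (starRingEnd ℂ) (h x) * g x)
        = ∑ x : Bn (m+1), (if x ∈ S then (starRingEnd ℂ) (h x) * (g (bflip i x) - g x) else 0) := by
          apply Finset.sum_congr rfl
          intro x _
          by_cases hx : x ∈ S <;> simp [hx] <;> ring
      _ = ∑ x ∈ S, (starRingEnd ℂ) (h x) * (g (bflip i x) - g x) := by
          rw [Finset.sum_ite_mem, Finset.univ_inter]
  have hT2 : ∑ x ∈ S, (starRingEnd ℂ) (h x) * (g (bflip i x) - g x)
      = ∑ x ∈ S, (starRingEnd ℂ) (h (bflip i x)) * (g x - g (bflip i x)) := by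
    apply Finset.sum_equiv hinv.toPerm
    · intro x; simpa using (hS x).symm
    · intro x _
      simp [Function.Involutive.coe_toPerm, hinv x]
  set T := ∑ x ∈ S, (starRingEnd ℂ) (h x) * (g (bflip i x) - g x) with hTdef
  have h2T : 2 * T = ∑ x ∈ S, -((starRingEnd ℂ) (h x - h (bflip i x)) * (g x - g (bflip i x))) := by
    rw [two_mul]
    nth_rewrite 2 [hT2]
    rw [← Finset.sum_add_distrib]
    apply Finset.sum_congr rfl
    intro x _
    simp only [map_sub]
    ring
  have key : 2 * ‖T‖ ≤ Real.sqrt A * Real.sqrt B := by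
    have habs : ‖2 * T‖ = 2 * ‖T‖ := by
      rw [norm_mul]; norm_num
    rw [← habs, h2T]
    calc ‖∑ x ∈ S, -((starRingEnd ℂ) (h x - h (bflip i x)) * (g x - g (bflip i x)))‖
        ≤ ∑ x ∈ S, ‖-((starRingEnd ℂ) (h x - h (bflip i x)) * (g x - g (bflip i x)))‖ :=
          norm_sum_le _ _
      _ = ∑ x ∈ S, ‖h x - h (bflip i x)‖ * ‖g x - g (bflip i x)‖ := by
          apply Finset.sum_congr rfl; intro x _
          rw [norm_neg, norm_mul, Complex.norm_conj]
      _ ≤ ∑ x : Bn (m+1), ‖h x - h (bflip i x)‖ * ‖g x - g (bflip i x)‖ :=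
          Finset.sum_le_sum_of_subset_of_nonneg (Finset.subset_univ S)
            (fun x _ _ => by positivity)
      _ ≤ Real.sqrt A * Real.sqrt B := by
          have := Finset.sum_mul_sq_le_sq_mul_sq Finset.univ
            (fun x : Bn (m+1) => ‖h x - h (bflip i x)‖)
            (fun x : Bn (m+1) => ‖g x - g (bflip i x)‖)
          have hnn : 0 ≤ ∑ x : Bn (m+1),
              ‖h x - h (bflip i x)‖ * ‖g x - g (bflip i x)‖ :=
            Finset.sum_nonneg fun x _ => by positivity
          calc ∑ x : Bn (m+1), ‖h x - h (bflip i x)‖ * ‖g x - g (bflip i x)‖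
              = Real.sqrt ((∑ x : Bn (m+1), ‖h x - h (bflip i x)‖ * ‖g x - g (bflip i x)‖) ^ 2) :=
                (Real.sqrt_sq hnn).symm
            _ ≤ Real.sqrt (A * B) := Real.sqrt_le_sqrt (by rw [hA, hB]; exact this)
            _ = Real.sqrt A * Real.sqrt B := Real.sqrt_mul hA0 _
  rw [hT]
  linarith [key]
end

section
/- Suppose a subspace M of ℂ^{2^n} of dimension at least 2 perfectly corrects the error set of single-point-controlled bit flips in the Knill–Laflamme sense: for all errors X, Y in the set and all orthogonal codewords φ₁, φ₂ ∈ M, ⟨Xφ₁, Yφ₂⟩ = 0. Then any two orthonormal codewords φ, ψ ∈ M satisfy, for every q ∈ {0,1}^n and i ∈ [n], (φ(q) − φ(q ⊕ e_i))*(ψ(q) − ψ(q ⊕ e_i)) = 0. -/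
open scoped BigOperators
open Complex

/-- if `M` (of dimension ≥ 2) perfectly corrects the identity together
with all single-point-controlled bit flips in the Knill–Laflamme sense, then any two
orthonormal codewords `φ, ψ` satisfy
`(φ(q) - φ(q ⊕ e_i))* (ψ(q) - ψ(q ⊕ e_i)) = 0` for all `q, i`. -/
theorem stmt4 {n : ℕ} (M : Submodule ℂ (Bn n → ℂ))
    (h2 : 2 ≤ Module.finrank ℂ M)
    (hKL : ∀ X Y : (Bn n → ℂ) → (Bn n → ℂ),
      (X = id ∨ ∃ i q, X = ctrlXpt i q) → (Y = id ∨ ∃ i q, Y = ctrlXpt i q) →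
      ∀ φ₁ ∈ M, ∀ φ₂ ∈ M, ip φ₁ φ₂ = 0 → ip (X φ₁) (Y φ₂) = 0) :
    ∀ φ ∈ M, ∀ ψ ∈ M, ip φ φ = 1 → ip ψ ψ = 1 → ip φ ψ = 0 →
      ∀ (q : Bn n) (i : Fin n),
        (starRingEnd ℂ) (φ q - φ (bflip i q)) * (ψ q - ψ (bflip i q)) = 0 := by
  intro φ hφ ψ hψ hφφ hψψ hortho q i
  have hE : ip φ (ctrlXpt i q ψ) = 0 :=
    hKL id (ctrlXpt i q) (Or.inl rfl) (Or.inr ⟨i, q, rfl⟩) φ hφ ψ hψ hortho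
  set q' := bflip i q with hq'
  have hne : q ≠ q' := by
    intro h
    have := congrFun h i
    simp [hq', bflip] at this
  have hflipflip : bflip i q' = q := by
    funext j
    by_cases hj : j = i
    · subst hj; simp [bflip, hq']
    · simp [bflip, hq', Function.update_of_ne hj]
  have hcondq : ∀ j, j ≠ i → q j = q j := fun _ _ => rfl
  have hcondq' : ∀ j, j ≠ i → q' j = q j := by
    intro j hj; simp [hq', bflip, Function.update_of_ne hj]
  set f : Bn n → ℂ := fun x => (starRingEnd ℂ) (φ x) * (ctrlXpt i q ψ x - ψ x) with hf
  have hvanish : ∀ x : Bn n, x ∉ ({q, q'} : Finset (Bn n)) → f x = 0 := by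
    intro x hx
    simp only [Finset.mem_insert, Finset.mem_singleton, not_or] at hx
    have hcond : ¬ ∀ j, j ≠ i → x j = q j := by
      intro h
      by_cases hxi : x i = q i
      · apply hx.1
        funext j
        by_cases hj : j = i
        · subst hj; exact hxi
        · exact h j hj
      · apply hx.2
        funext j
        by_cases hj : j = i
        · subst hj
          simp only [hq', bflip, Function.update_self]
          revert hxi
          cases x j <;> cases q j <;> simp
        · rw [h j hj]
          simp [hq', bflip, Function.update_of_ne hj]
    simp [hf, ctrlXpt, hcond]
  have hsum : ∑ x : Bn n, f x = 0 := by
    have h1 : (∑ x : Bn n, (starRingEnd ℂ) (φ x) * ctrlXpt i q ψ x) = 0 := hE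
    have h2' : (∑ x : Bn n, (starRingEnd ℂ) (φ x) * ψ x) = 0 := hortho
    simp only [hf, mul_sub, Finset.sum_sub_distrib, h1, h2', sub_zero]
  have hpair : f q + f q' = 0 := by
    rw [← Finset.sum_pair hne]
    rw [Finset.sum_subset (Finset.subset_univ _) (fun x _ hx => hvanish x hx)]
    exact hsum
  have hEq : ctrlXpt i q ψ q = ψ q' := by
    unfold ctrlXpt
    rw [if_pos hcondq]
  have hEq' : ctrlXpt i q ψ q' = ψ q := by
    unfold ctrlXpt
    rw [if_pos hcondq', hflipflip]
  have hfq : f q = (starRingEnd ℂ) (φ q) * (ψ q' - ψ q) := by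
    simp only [hf, hEq]
  have hfq' : f q' = (starRingEnd ℂ) (φ q') * (ψ q - ψ q') := by
    simp only [hf, hEq']
  rw [hfq, hfq'] at hpair
  rw [map_sub]
  linear_combination (-1 : ℂ) * hpair
end

section
/- Let f : {0,1}^{n'} → {−1/2, 1/2} be a balanced function (taking each value on exactly half the inputs), and let n = 2B·n'. For z ∈ {0,1}^B define f_z : {0,1}^n → ℂ by f_z(x) = ∏_{k=1}^{B} f(x_{k,z_k}), where x is partitioned into 2B consecutive blocks of length n' and x_{k,b} is the (2k−1+b)-th block. Then the family {f_z : z ∈ {0,1}^B} is orthogonal in ℂ^{2^n}: for z ≠ z', Σ_{x∈{0,1}^n} f_z(x)* f_{z'}(x) = 0. Moreover ⟨f_z, f_z⟩ = 2^{n−2B}. -/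
open scoped BigOperators
open Complex

/-- Strings of length `n = 2Bn'`, viewed as `2B` blocks of length `n'`, indexed by
`(k,b)` with `k : Fin B`, `b : Bool`. -/
abbrev Blk (B n' : ℕ) := Fin B → Bool → (Fin n' → Bool)

/-- Hermitian inner product on functions `{0,1}^n → ℂ` in the block encoding. -/
noncomputable def ipB {B n' : ℕ} (h g : Blk B n' → ℂ) : ℂ :=
  ∑ x : Blk B n', (starRingEnd ℂ) (h x) * g x

/-- The codeword `f_z(x) = ∏_k f(x_{k,z_k})`. -/
noncomputable def fz {B n' : ℕ} (f : (Fin n' → Bool) → ℂ) (z : Fin B → Bool)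
    (x : Blk B n') : ℂ :=
  ∏ k : Fin B, f (x k (z k))

/-- Flip the `j`-th bit of a length-`n'` string. -/
def wflip {n' : ℕ} (j : Fin n') (w : Fin n' → Bool) : Fin n' → Bool :=
  Function.update w j (!w j)

/-- Flip the bit at position `j` of block `(k,b)`. -/
def blkflip {B n' : ℕ} (k : Fin B) (b : Bool) (j : Fin n') (x : Blk B n') : Blk B n' :=
  Function.update x k (Function.update (x k) b (wflip j (x k b)))

/-- Influence of coordinate `(k,b,j)` on `φ : {0,1}^n → ℂ`, `n = 2Bn'`. -/
noncomputable def inflB {B n' : ℕ} (k : Fin B) (b : Bool) (j : Fin n')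
    (φ : Blk B n' → ℂ) : ℝ :=
  (∑ x : Blk B n', ‖φ x - φ (blkflip k b j x)‖ ^ 2) / 2 ^ (2 * B * n')


section aux
variable {W : Type*} [Fintype W]

lemma sum_boolArrow (F : (Bool → W) → ℂ) :
    ∑ y : Bool → W, F y = ∑ p : W × W, F (fun c => c.casesOn p.1 p.2) := by
  rw [← Equiv.sum_comp (Equiv.boolArrowEquivProd W).symm F]
  exact Finset.sum_congr rfl fun p _ => congrArg F (funext fun c => by cases c <;> rfl)

lemma sum_two_ne (b b' : Bool) (hbb : b ≠ b') (g h : W → ℂ) :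
    ∑ y : Bool → W, g (y b) * h (y b') = (∑ w, g w) * (∑ w, h w) := by
  rw [sum_boolArrow (fun y => g (y b) * h (y b')), Fintype.sum_prod_type]
  cases b <;> cases b' <;> simp_all [Finset.mul_sum, Finset.sum_mul]
  rw [Finset.sum_comm]

lemma sum_two_eq (b : Bool) (g h : W → ℂ) :
    ∑ y : Bool → W, g (y b) * h (y b) = (Fintype.card W) * ∑ w, g w * h w := by
  rw [sum_boolArrow (fun y => g (y b) * h (y b)), Fintype.sum_prod_type]
  cases b <;> simp [Finset.sum_const, Finset.mul_sum, mul_comm]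

end aux

/-- for a balanced `f : {0,1}^{n'} → {±1/2}`, the family
`{f_z : z ∈ {0,1}^B}` is orthogonal, and `⟨f_z, f_z⟩ = 2^{n-2B}` with `n = 2Bn'`. -/
theorem stmt5 {B n' : ℕ} (hn' : 0 < n')
    (f : (Fin n' → Bool) → ℂ)
    (hval : ∀ w, f w = 1 / 2 ∨ f w = -(1 / 2))
    (hbal : {w | f w = 1 / 2}.ncard = 2 ^ (n' - 1)) :
    (∀ z z' : Fin B → Bool, z ≠ z' → ipB (fz f z) (fz f z') = 0) ∧
    (∀ z : Fin B → Bool, ipB (fz f z) (fz f z) = 2 ^ (2 * B * n' - 2 * B)) := by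
  classical
  have hconj : ∀ w, (starRingEnd ℂ) (f w) = f w := by
    intro w; rcases hval w with h | h <;> rw [h] <;> simp [Complex.conj_ofNat]
  have hsq : ∀ w, f w * f w = 1 / 4 := by
    intro w; rcases hval w with h | h <;> rw [h] <;> norm_num
  have hcard : (Finset.univ.filter (fun w : (Fin n' → Bool) => f w = 1 / 2)).card = 2 ^ (n' - 1) := by
    rw [← hbal, Set.ncard_eq_toFinset_card', Set.toFinset_setOf]
  have hcardW : Fintype.card (Fin n' → Bool) = 2 ^ n' := by
    simp
  have h2n : 2 ^ n' = 2 * 2 ^ (n' - 1) := by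
    rw [← pow_succ']; congr 1; omega
  have hcard' : (Finset.univ.filter (fun w : (Fin n' → Bool) => ¬ f w = 1 / 2)).card = 2 ^ (n' - 1) := by
    have := Finset.card_filter_add_card_filter_not
      (s := (Finset.univ : Finset (Fin n' → Bool))) (p := fun w => f w = 1 / 2)
    rw [hcard, Finset.card_univ, hcardW] at this
    omega
  have hsum : ∑ w : (Fin n' → Bool), f w = 0 := by
    rw [← Finset.sum_filter_add_sum_filter_not Finset.univ (fun w => f w = 1 / 2) f]
    have h1 : ∑ w ∈ Finset.univ.filter (fun w : (Fin n' → Bool) => f w = 1 / 2), f w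
        = (2 ^ (n' - 1) : ℕ) * (1 / 2) := by
      rw [Finset.sum_congr rfl (fun w hw => (Finset.mem_filter.1 hw).2),
        Finset.sum_const, hcard, nsmul_eq_mul]
    have h2 : ∑ w ∈ Finset.univ.filter (fun w : (Fin n' → Bool) => ¬ f w = 1 / 2), f w
        = (2 ^ (n' - 1) : ℕ) * (-(1 / 2)) := by
      rw [Finset.sum_congr rfl (fun w hw => ?_), Finset.sum_const, hcard', nsmul_eq_mul]
      rcases hval w with h | h
      · exact absurd h (Finset.mem_filter.1 hw).2
      · exact h
    rw [h1, h2]; ring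
  have key : ∀ z z' : Fin B → Bool, ipB (fz f z) (fz f z')
      = ∏ k : Fin B, ∑ y : Bool → (Fin n' → Bool), f (y (z k)) * f (y (z' k)) := by
    intro z z'
    rw [Fintype.prod_sum]
    unfold ipB fz
    congr 1; funext x
    rw [map_prod, ← Finset.prod_mul_distrib]
    exact Finset.prod_congr rfl fun k _ => by rw [hconj]
  have hsumsq : ∑ w : (Fin n' → Bool), f w * f w = (2 ^ n' : ℂ) * (1 / 4) := by
    simp_rw [hsq]
    rw [Finset.sum_const, Finset.card_univ, hcardW, nsmul_eq_mul]
    push_cast; ring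
  constructor
  · intro z z' hne
    obtain ⟨k, hk⟩ := Function.ne_iff.1 hne
    rw [key]
    refine Finset.prod_eq_zero (Finset.mem_univ k) ?_
    rw [sum_two_ne _ _ hk, hsum, zero_mul]
  · intro z
    rw [key]
    have hfac : ∀ k : Fin B, (∑ y : Bool → (Fin n' → Bool), f (y (z k)) * f (y (z k)))
        = (2 : ℂ) ^ (2 * n' - 2) := by
      intro k
      rw [sum_two_eq, hsumsq, hcardW]
      push_cast
      have h4 : (4:ℂ) = 2^2 := by norm_num
      field_simp
      rw [h4, ← pow_add, ← pow_mul]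
      exact congrArg (fun m : ℕ => (2:ℂ) ^ m) (by omega)
    rw [Finset.prod_congr rfl (fun k _ => hfac k), Finset.prod_const, Finset.card_univ,
      Fintype.card_fin, ← pow_mul]
    congr 1
    rw [Nat.sub_mul]; ring_nf
end

section
/- In the block construction with a balanced f of influence at most s, the subspace W = span{f_z : z ∈ {0,1}^B} has dimension 2^B and is (ControlledBitFlip, 2s)-immune: for every controlled bit-flip operator E_{i,S} (i ∈ [n], S ⊆ {0,1}^{n-1}) and every φ ∈ W, |⟨φ, E_{i,S} φ⟩| ≥ (1 − 2s)·⟨φ,φ⟩. -/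
open scoped BigOperators
open Complex

/-- Controlled bit flip on coordinate `(k,b,j)` with control set `S ⊆ {0,1}^{n-1}`,
encoded as an invariant set of full strings. -/
noncomputable def ctrlXB {B n' : ℕ} (k : Fin B) (b : Bool) (j : Fin n')
    (S : Finset (Blk B n')) (g : Blk B n' → ℂ) : Blk B n' → ℂ :=
  fun x => if x ∈ S then g (blkflip k b j x) else g x

/-! ### Auxiliary lemmas -/

lemma card_str {n' : ℕ} : (Finset.univ : Finset (Fin n' → Bool)).card = 2 ^ n' := by
  simp [Finset.card_univ]

lemma sum_bool_arrow {n' : ℕ} (F : (Bool → (Fin n' → Bool)) → ℂ) :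
    ∑ y : Bool → (Fin n' → Bool), F y
      = ∑ p : (Fin n' → Bool) × (Fin n' → Bool), F (fun b => b.casesOn p.1 p.2) :=
  Fintype.sum_equiv (Equiv.boolArrowEquivProd _) F
    (fun p => F (fun b => b.casesOn p.1 p.2))
    (fun y => by congr 1; funext b; cases b <;> rfl)

lemma sum_pair_eq {n' : ℕ} (c : Bool) (H H' : (Fin n' → Bool) → ℂ) :
    ∑ y : Bool → (Fin n' → Bool), H (y c) * H' (y c) = 2 ^ n' * ∑ w, H w * H' w := by
  rw [sum_bool_arrow, Fintype.sum_prod_type]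
  cases c
  · simp [Finset.sum_const, card_str, Finset.mul_sum, mul_comm]
  · rw [Finset.sum_comm]
    simp [Finset.sum_const, card_str, Finset.mul_sum]

lemma sum_pair_ne {n' : ℕ} {c c' : Bool} (h : c ≠ c') (H H' : (Fin n' → Bool) → ℂ) :
    ∑ y : Bool → (Fin n' → Bool), H (y c) * H' (y c') = (∑ w, H w) * ∑ w, H' w := by
  rw [sum_bool_arrow, Fintype.sum_prod_type]
  cases c <;> cases c' <;> simp_all [Finset.sum_mul, Finset.mul_sum]
  rw [Finset.sum_comm]

lemma master {B n' : ℕ} (bt bt' : Fin B → Bool) (H H' : Fin B → (Fin n' → Bool) → ℂ) :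
    (∑ x : Blk B n', (∏ k, H k (x k (bt k))) * ∏ k, H' k (x k (bt' k))) =
    ∏ k, (if bt k = bt' k then 2 ^ n' * ∑ w, H k w * H' k w
          else (∑ w, H k w) * ∑ w, H' k w) := by
  set g : Fin B → (Bool → (Fin n' → Bool)) → ℂ :=
    fun k y => H k (y (bt k)) * H' k (y (bt' k)) with hg
  have h1 : ∀ x : Blk B n', (∏ k, H k (x k (bt k))) * ∏ k, H' k (x k (bt' k))
      = ∏ k, g k (x k) := by
    intro x; rw [← Finset.prod_mul_distrib]
  have h2 := Fintype.prod_sum g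
  rw [Finset.sum_congr rfl (fun x _ => h1 x), ← h2]
  refine Finset.prod_congr rfl fun k _ => ?_
  by_cases h : bt k = bt' k
  · rw [if_pos h, hg]; simp only; rw [h, sum_pair_eq]
  · rw [if_neg h, hg]; simp only; rw [sum_pair_ne h]

lemma quarter {n' : ℕ} (f : (Fin n' → Bool) → ℂ)
    (hval : ∀ w, f w = 1 / 2 ∨ f w = -(1 / 2)) (w : Fin n' → Bool) :
    (starRingEnd ℂ) (f w) * f w = 1 / 4 := by
  rcases hval w with h | h <;> rw [h] <;>
    simp [map_div₀, map_ofNat, map_neg] <;> norm_num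

lemma sumf {n' : ℕ} (hn' : 0 < n') (f : (Fin n' → Bool) → ℂ)
    (hval : ∀ w, f w = 1 / 2 ∨ f w = -(1 / 2))
    (hbal : {w | f w = 1 / 2}.ncard = 2 ^ (n' - 1)) :
    ∑ w, f w = 0 := by
  classical
  set P : Finset (Fin n' → Bool) := Finset.univ.filter (fun w => f w = 1 / 2) with hP
  have hcard : P.card = 2 ^ (n' - 1) := by
    rw [← hbal, Set.ncard_eq_toFinset_card']
    congr 1
    ext w
    simp [hP]
  have hcardc : Pᶜ.card = 2 ^ (n' - 1) := by
    rw [Finset.card_compl, hcard]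
    have h2 : Fintype.card (Fin n' → Bool) = 2 ^ n' := by simp
    have h3 : 2 ^ n' = 2 * 2 ^ (n' - 1) := by
      rw [← pow_succ']
      congr 1
      omega
    omega
  have h1 : ∑ w ∈ P, f w = (2 ^ (n' - 1) : ℕ) • ((1 : ℂ) / 2) := by
    rw [← hcard, ← Finset.sum_const]
    exact Finset.sum_congr rfl fun w hw => by simpa [hP] using hw
  have h2 : ∑ w ∈ Pᶜ, f w = (2 ^ (n' - 1) : ℕ) • (-(1 : ℂ) / 2) := by
    rw [← hcardc, ← Finset.sum_const]
    refine Finset.sum_congr rfl fun w hw => ?_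
    have : ¬ (f w = 1 / 2) := by simpa [hP] using hw
    rcases hval w with h | h
    · exact absurd h this
    · rw [h]; ring
  have := Finset.sum_add_sum_compl P f
  rw [h1, h2] at this
  rw [← this]
  simp
  ring

lemma flipdiff {n' : ℕ} (f : (Fin n' → Bool) → ℂ)
    (hval : ∀ w, f w = 1 / 2 ∨ f w = -(1 / 2)) (j : Fin n') :
    ∑ w, (starRingEnd ℂ) (f w - f (wflip j w)) * (f w - f (wflip j w))
      = ({w | f w ≠ f (wflip j w)}.ncard : ℂ) := by
  classical
  have hpt : ∀ w, (starRingEnd ℂ) (f w - f (wflip j w)) * (f w - f (wflip j w))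
      = if f w = f (wflip j w) then 0 else 1 := by
    intro w
    by_cases h : f w = f (wflip j w)
    · rw [if_pos h, h, sub_self, map_zero, zero_mul]
    · rw [if_neg h]
      rcases hval w with h1 | h1 <;> rcases hval (wflip j w) with h2 | h2
      · exact absurd (h1.trans h2.symm) h
      · rw [h1, h2]; norm_num
      · rw [h1, h2]; norm_num
      · exact absurd (h1.trans h2.symm) h
  rw [Finset.sum_congr rfl fun w _ => hpt w]
  have hn : {w | f w ≠ f (wflip j w)}.ncard
      = (Finset.univ.filter (fun w => ¬ (f w = f (wflip j w)))).card := by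
    rw [Set.ncard_eq_toFinset_card']
    congr 1
    ext w
    simp
  rw [hn, Finset.sum_ite, Finset.sum_const, Finset.sum_const]
  simp

lemma wflip_invol {n' : ℕ} (j : Fin n') (w : Fin n' → Bool) : wflip j (wflip j w) = w := by
  unfold wflip
  rw [Function.update_self, Bool.not_not, Function.update_idem, Function.update_eq_self]

lemma blkflip_ne {B n' : ℕ} {k k' : Fin B} (h : k' ≠ k) (b : Bool) (j : Fin n')
    (x : Blk B n') : blkflip k b j x k' = x k' := by
  unfold blkflip
  rw [Function.update_of_ne h]

lemma blkflip_k {B n' : ℕ} (k : Fin B) (b c : Bool) (j : Fin n') (x : Blk B n') :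
    blkflip k b j x k c = if c = b then wflip j (x k b) else x k c := by
  unfold blkflip
  rw [Function.update_self]
  by_cases h : c = b
  · rw [if_pos h, h, Function.update_self]
  · rw [if_neg h, Function.update_of_ne h]

lemma blkflip_invol {B n' : ℕ} (k : Fin B) (b : Bool) (j : Fin n') (x : Blk B n') :
    blkflip k b j (blkflip k b j x) = x := by
  funext k' c
  by_cases hk : k' = k
  · subst hk
    rw [blkflip_k, blkflip_k]
    by_cases hc : c = b
    · rw [if_pos hc, if_pos rfl, wflip_invol, hc]
    · rw [if_neg hc, blkflip_k, if_neg hc]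
  · rw [blkflip_ne hk, blkflip_ne hk]

/-- for balanced `f` of per-coordinate influence at most `s`,
`W = span{f_z}` has dimension `2^B` and is `(ControlledBitFlip, 2s)`-immune:
`|⟨φ, E_{i,S} φ⟩| ≥ (1 - 2s)⟨φ,φ⟩` for all `φ ∈ W` and all `E_{i,S}`. -/
theorem stmt7 {B n' : ℕ} (hn' : 0 < n')
    (f : (Fin n' → Bool) → ℂ)
    (hval : ∀ w, f w = 1 / 2 ∨ f w = -(1 / 2))
    (hbal : {w | f w = 1 / 2}.ncard = 2 ^ (n' - 1))
    (s : ℝ)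
    (hs : ∀ j : Fin n', (({w | f w ≠ f (wflip j w)}.ncard : ℝ)) / 2 ^ n' ≤ s) :
    Module.finrank ℂ (Submodule.span ℂ (Set.range (fz (B := B) f))) = 2 ^ B ∧
    ∀ φ ∈ Submodule.span ℂ (Set.range (fz (B := B) f)),
      ∀ (k : Fin B) (b : Bool) (j : Fin n') (S : Finset (Blk B n')),
        (∀ x, blkflip k b j x ∈ S ↔ x ∈ S) →
        (1 - 2 * s) * ∑ x : Blk B n', ‖φ x‖ ^ 2 ≤
          ‖ipB φ (ctrlXB k b j S φ)‖ := by
  classical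
  have hq := quarter f hval
  have hsf : ∑ w, f w = 0 := sumf hn' f hval hbal
  have hsfc : ∑ w, (starRingEnd ℂ) (f w) = 0 := by
    rw [← map_sum, hsf, map_zero]
  have hqs : ∑ w : Fin n' → Bool, (starRingEnd ℂ) (f w) * f w = (2 : ℂ) ^ n' / 4 := by
    rw [Finset.sum_congr rfl fun w _ => hq w, Finset.sum_const, card_str]
    simp
    ring
  set q : ℂ := 2 ^ n' * ((2 : ℂ) ^ n' / 4) with hqdef
  set HC : Fin B → (Fin n' → Bool) → ℂ := fun _ w => (starRingEnd ℂ) (f w) with hHC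
  set HF : Fin B → (Fin n' → Bool) → ℂ := fun _ => f with hHF
  -- orthogonality of the codewords
  have horth : ∀ z z' : Fin B → Bool,
      (∑ x : Blk B n', (starRingEnd ℂ) (fz f z x) * fz f z' x)
        = if z = z' then q ^ B else 0 := by
    intro z z'
    have e1 : (∑ x : Blk B n', (starRingEnd ℂ) (fz f z x) * fz f z' x)
        = ∑ x : Blk B n', (∏ k, HC k (x k (z k))) * ∏ k, HF k (x k (z' k)) := by
      refine Finset.sum_congr rfl fun x _ => ?_
      rw [fz, map_prod]
      rfl
    rw [e1, master z z' HC HF]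
    by_cases hzz : z = z'
    · subst hzz
      rw [if_pos rfl]
      have : ∀ k : Fin B, (if z k = z k then 2 ^ n' * ∑ w, HC k w * HF k w
          else (∑ w, HC k w) * ∑ w, HF k w) = q := by
        intro k
        rw [if_pos rfl, show (∑ w, HC k w * HF k w) = (2 : ℂ) ^ n' / 4 from hqs, hqdef]
      rw [Finset.prod_congr rfl fun k _ => this k, Finset.prod_const, Finset.card_univ,
        Fintype.card_fin]
    · rw [if_neg hzz]
      obtain ⟨k, hk⟩ : ∃ k, z k ≠ z' k := by
        by_contra hcon
        push_neg at hcon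
        exact hzz (funext hcon)
      refine Finset.prod_eq_zero (Finset.mem_univ k) ?_
      rw [if_neg hk, show (∑ w, HF k w) = 0 from hsf, mul_zero]
  have h2n : (2 : ℂ) ^ n' ≠ 0 := pow_ne_zero _ two_ne_zero
  have hqB : q ^ B ≠ 0 :=
    pow_ne_zero _ (mul_ne_zero h2n (div_ne_zero h2n (by norm_num)))
  constructor
  · -- dimension count
    have hlin : LinearIndependent ℂ (fz (B := B) f) := by
      rw [Fintype.linearIndependent_iff]
      intro c hc z0
      have h0 : (∑ x : Blk B n', (starRingEnd ℂ) (fz f z0 x) * (∑ z, c z • fz f z) x)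
          = c z0 * q ^ B := by
        have e2 : ∀ x : Blk B n', (∑ z, c z • fz f z) x = ∑ z, c z * fz f z x := by
          intro x; simp [Finset.sum_apply]
        calc (∑ x : Blk B n', (starRingEnd ℂ) (fz f z0 x) * (∑ z, c z • fz f z) x)
            = ∑ z, c z * ∑ x : Blk B n', (starRingEnd ℂ) (fz f z0 x) * fz f z x := by
              rw [Finset.sum_congr rfl fun x _ => by rw [e2 x, Finset.mul_sum]]
              rw [Finset.sum_comm]
              exact Finset.sum_congr rfl fun z _ => by
                rw [Finset.mul_sum]
                exact Finset.sum_congr rfl fun x _ => by ring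
          _ = c z0 * q ^ B := by
              rw [Finset.sum_congr rfl fun z _ => by rw [horth z0 z]]
              simp [Finset.sum_ite_eq, mul_ite]
      rw [hc] at h0
      simp only [Pi.zero_apply, mul_zero, Finset.sum_const_zero] at h0
      exact (mul_eq_zero.mp h0.symm).resolve_right hqB
    rw [finrank_span_eq_card hlin]
    simp
  · -- immunity
    intro φ hφ k b j S hS
    obtain ⟨c, hc⟩ := (Submodule.mem_span_range_iff_exists_fun ℂ).mp hφ
    set σ : Blk B n' → Blk B n' := blkflip k b j with hσ
    have hinv : ∀ x, σ (σ x) = x := blkflip_invol k b j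
    set df : (Fin n' → Bool) → ℂ := fun w => f w - f (wflip j w) with hdf
    set νc : ℂ := ∑ w, (starRingEnd ℂ) (df w) * df w with hνc
    set N : ℕ := {w | f w ≠ f (wflip j w)}.ncard with hN
    have hνN : νc = (N : ℂ) := flipdiff f hval j
    set Hz : (Fin B → Bool) → Fin B → (Fin n' → Bool) → ℂ :=
      fun z k' => if k' = k then (if z k = b then df else 0) else f with hHz
    set HzC : (Fin B → Bool) → Fin B → (Fin n' → Bool) → ℂ :=
      fun z k' w => (starRingEnd ℂ) (Hz z k' w) with hHzC
    set bz : (Fin B → Bool) → Fin B → Bool := fun z => Function.update z k b with hbzdef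
    have hHzk : ∀ z, Hz z k = (if z k = b then df else 0) := fun z => if_pos rfl
    have hHzne : ∀ z k', k' ≠ k → Hz z k' = f := fun z k' h => if_neg h
    have hbzk : ∀ z, bz z k = b := fun z => Function.update_self k b z
    have hbzne : ∀ z k', k' ≠ k → bz z k' = z k' := fun z k' h => Function.update_of_ne h b z
    -- the difference of a codeword under the flip, in product form
    have hdz : ∀ z x, fz f z x - fz f z (σ x) = ∏ k', Hz z k' (x k' (bz z k')) := by
      intro z x
      by_cases hzb : z k = b
      · have hb : bz z = z := by
          rw [hbzdef]; simp only; rw [← hzb, Function.update_eq_self]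
        rw [hb]
        have h1 : fz f z x = f (x k (z k)) * ∏ k' ∈ Finset.univ.erase k, f (x k' (z k')) :=
          (Finset.mul_prod_erase _ _ (Finset.mem_univ k)).symm
        have h2 : fz f z (σ x)
            = f (wflip j (x k b)) * ∏ k' ∈ Finset.univ.erase k, f (x k' (z k')) := by
          rw [fz, ← Finset.mul_prod_erase Finset.univ _ (Finset.mem_univ k)]
          congr 1
          · rw [hσ, blkflip_k, if_pos hzb]
          · refine Finset.prod_congr rfl fun k' hk' => ?_
            rw [hσ, blkflip_ne (Finset.ne_of_mem_erase hk')]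
        have h3 : (∏ k', Hz z k' (x k' (z k')))
            = df (x k b) * ∏ k' ∈ Finset.univ.erase k, f (x k' (z k')) := by
          rw [← Finset.mul_prod_erase Finset.univ _ (Finset.mem_univ k)]
          congr 1
          · rw [hHzk z, if_pos hzb, hzb]
          · refine Finset.prod_congr rfl fun k' hk' => ?_
            rw [hHzne z k' (Finset.ne_of_mem_erase hk')]
        rw [h1, h2, h3, hdf, hzb]
        simp only
        ring
      · have hL : fz f z (σ x) = fz f z x := by
          unfold fz
          refine Finset.prod_congr rfl fun k' _ => ?_
          by_cases hk : k' = k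
          · subst hk; rw [hσ, blkflip_k, if_neg hzb]
          · rw [hσ, blkflip_ne hk]
        rw [hL, sub_self]
        symm
        refine Finset.prod_eq_zero (Finset.mem_univ k) ?_
        rw [hHzk z, if_neg hzb]
        rfl
    -- orthogonality of the differences
    have hD : ∀ z z' : Fin B → Bool,
        (∑ x : Blk B n',
            (starRingEnd ℂ) (fz f z x - fz f z (σ x)) * (fz f z' x - fz f z' (σ x)))
          = if z = z' ∧ z k = b then (2 ^ n' * νc) * q ^ (B - 1) else 0 := by
      intro z z'
      have e1 : (∑ x : Blk B n',
            (starRingEnd ℂ) (fz f z x - fz f z (σ x)) * (fz f z' x - fz f z' (σ x)))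
          = ∑ x : Blk B n',
              (∏ k', HzC z k' (x k' (bz z k'))) * ∏ k', Hz z' k' (x k' (bz z' k')) := by
        refine Finset.sum_congr rfl fun x _ => ?_
        rw [hdz z x, hdz z' x, map_prod]
      rw [e1, master (bz z) (bz z') (HzC z) (Hz z')]
      by_cases hoff : ∀ k', k' ≠ k → z k' = z' k'
      · by_cases hzb : z k = b
        · by_cases hz'b : z' k = b
          · have hzz : z = z' := funext fun k' => by
              by_cases hk : k' = k
              · rw [hk, hzb, hz'b]
              · exact hoff k' hk
            rw [if_pos ⟨hzz, hzb⟩]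
            rw [← Finset.mul_prod_erase Finset.univ _ (Finset.mem_univ k)]
            have hfk : (if bz z k = bz z' k then 2 ^ n' * ∑ w, HzC z k w * Hz z' k w
                else (∑ w, HzC z k w) * ∑ w, Hz z' k w) = 2 ^ n' * νc := by
              rw [if_pos (by rw [hbzk, hbzk])]
              congr 1
              rw [hνc]
              refine Finset.sum_congr rfl fun w _ => ?_
              rw [hHzC]
              simp only
              rw [hHzk z, if_pos hzb, hHzk z', if_pos hz'b]
            have hfke : ∀ k' ∈ Finset.univ.erase k,
                (if bz z k' = bz z' k' then 2 ^ n' * ∑ w, HzC z k' w * Hz z' k' w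
                  else (∑ w, HzC z k' w) * ∑ w, Hz z' k' w) = q := by
              intro k' hk'
              have hne := Finset.ne_of_mem_erase hk'
              rw [if_pos (by rw [hbzne z k' hne, hbzne z' k' hne, hoff k' hne])]
              rw [hqdef]
              congr 1
              rw [← hqs]
              refine Finset.sum_congr rfl fun w _ => ?_
              rw [hHzC]
              simp only
              rw [hHzne z k' hne, hHzne z' k' hne]
            rw [hfk, Finset.prod_congr rfl hfke, Finset.prod_const,
              Finset.card_erase_of_mem (Finset.mem_univ k), Finset.card_univ, Fintype.card_fin]
          · rw [if_neg (fun h => hz'b (by rw [← h.1]; exact hzb))]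
            refine Finset.prod_eq_zero (Finset.mem_univ k) ?_
            rw [if_pos (by rw [hbzk, hbzk])]
            have hz0 : ∀ w, HzC z k w * Hz z' k w = 0 := by
              intro w
              rw [show Hz z' k w = 0 from by rw [hHzk z', if_neg hz'b]; rfl, mul_zero]
            rw [Finset.sum_congr rfl fun w _ => hz0 w, Finset.sum_const_zero, mul_zero]
        · rw [if_neg (fun h => hzb h.2)]
          refine Finset.prod_eq_zero (Finset.mem_univ k) ?_
          rw [if_pos (by rw [hbzk, hbzk])]
          have hz0 : ∀ w, HzC z k w * Hz z' k w = 0 := by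
            intro w
            rw [show HzC z k w = 0 from by
              rw [hHzC]; simp only; rw [hHzk z, if_neg hzb]; simp, zero_mul]
          rw [Finset.sum_congr rfl fun w _ => hz0 w, Finset.sum_const_zero, mul_zero]
      · push_neg at hoff
        obtain ⟨k', hk', hne⟩ := hoff
        have hzz : z ≠ z' := fun h => hne (by rw [h])
        rw [if_neg (fun h => hzz h.1)]
        refine Finset.prod_eq_zero (Finset.mem_univ k') ?_
        rw [if_neg (by rw [hbzne z k' hk', hbzne z' k' hk']; exact hne)]
        have hz0 : (∑ w, Hz z' k' w) = 0 := by rw [hHzne z' k' hk']; exact hsf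
        rw [hz0, mul_zero]
    -- expansions of quadratic forms
    have hφx : ∀ x, φ x = ∑ z, c z * fz f z x := by
      intro x; rw [← hc]; simp [Finset.sum_apply]
    have hφσ : ∀ x, φ x - φ (σ x) = ∑ z, c z * (fz f z x - fz f z (σ x)) := by
      intro x
      rw [hφx x, hφx (σ x), ← Finset.sum_sub_distrib]
      exact Finset.sum_congr rfl fun z _ => by ring
    have hexp : ∀ g : (Fin B → Bool) → Blk B n' → ℂ,
        (∑ x : Blk B n', (starRingEnd ℂ) (∑ z, c z * g z x) * ∑ z, c z * g z x)
        = ∑ z, ∑ z', ((starRingEnd ℂ) (c z) * c z')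
            * ∑ x : Blk B n', (starRingEnd ℂ) (g z x) * g z' x := by
      intro g
      have h1 : ∀ x, (starRingEnd ℂ) (∑ z, c z * g z x) * ∑ z, c z * g z x
          = ∑ z, ∑ z', ((starRingEnd ℂ) (c z) * c z')
              * ((starRingEnd ℂ) (g z x) * g z' x) := by
        intro x
        rw [map_sum, Finset.sum_mul_sum]
        refine Finset.sum_congr rfl fun z _ => Finset.sum_congr rfl fun z' _ => ?_
        rw [map_mul]; ring
      rw [Finset.sum_congr rfl fun x _ => h1 x, Finset.sum_comm]
      refine Finset.sum_congr rfl fun z _ => ?_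
      rw [Finset.sum_comm]
      refine Finset.sum_congr rfl fun z' _ => ?_
      rw [Finset.mul_sum]
    have hA1 : (∑ x : Blk B n', (starRingEnd ℂ) (φ x) * φ x)
        = q ^ B * ∑ z, (starRingEnd ℂ) (c z) * c z := by
      rw [Finset.sum_congr rfl fun x _ => by rw [hφx x]]
      rw [hexp (fz f)]
      rw [Finset.sum_congr rfl fun z (_ : z ∈ Finset.univ) =>
        Finset.sum_congr rfl fun z' _ => by rw [horth z z']]
      rw [Finset.mul_sum]
      refine Finset.sum_congr rfl fun z _ => ?_
      simp [Finset.sum_ite_eq, mul_ite]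
      ring
    set filt : Finset (Fin B → Bool) := Finset.univ.filter (fun z => z k = b) with hfilt
    have hD1 : (∑ x : Blk B n', (starRingEnd ℂ) (φ x - φ (σ x)) * (φ x - φ (σ x)))
        = (2 ^ n' * νc) * q ^ (B - 1) * ∑ z ∈ filt, (starRingEnd ℂ) (c z) * c z := by
      rw [Finset.sum_congr rfl fun x _ => by rw [hφσ x]]
      rw [hexp (fun z x => fz f z x - fz f z (σ x))]
      rw [Finset.sum_congr rfl fun z (_ : z ∈ Finset.univ) =>
        Finset.sum_congr rfl fun z' _ => by rw [hD z z']]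
      have h2 : ∀ z : Fin B → Bool, (∑ z', ((starRingEnd ℂ) (c z) * c z')
          * (if z = z' ∧ z k = b then (2 ^ n' * νc) * q ^ (B - 1) else 0))
          = if z k = b
            then ((starRingEnd ℂ) (c z) * c z) * ((2 ^ n' * νc) * q ^ (B - 1)) else 0 := by
        intro z
        have h3 : ∀ z', ((starRingEnd ℂ) (c z) * c z')
            * (if z = z' ∧ z k = b then (2 ^ n' * νc) * q ^ (B - 1) else 0)
            = if z = z' then (if z k = b
              then ((starRingEnd ℂ) (c z) * c z') * ((2 ^ n' * νc) * q ^ (B - 1)) else 0)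
              else 0 := by
          intro z'
          by_cases h4 : z = z'
          · by_cases h5 : z k = b <;> simp [h4, h5]
          · simp [h4]
        rw [Finset.sum_congr rfl fun z' _ => h3 z', Finset.sum_ite_eq]
        simp
      rw [Finset.sum_congr rfl fun z _ => h2 z, hfilt, ← Finset.sum_filter, ← Finset.sum_mul]
      ring
    -- real versions
    set Q : ℝ := 2 ^ n' * ((2 : ℝ) ^ n' / 4) with hQdef
    set m : ℝ := Q ^ B with hmdef
    have hmq : ((m : ℝ) : ℂ) = q ^ B := by
      rw [hmdef, hQdef, hqdef]; push_cast; ring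
    set Creal : ℝ := ∑ z, Complex.normSq (c z) with hCreal
    have hCc : ((Creal : ℝ) : ℂ) = ∑ z, (starRingEnd ℂ) (c z) * c z := by
      rw [hCreal]
      push_cast
      exact Finset.sum_congr rfl fun z _ => Complex.normSq_eq_conj_mul_self
    set Cfil : ℝ := ∑ z ∈ filt, Complex.normSq (c z) with hCfil
    have hCfc : ((Cfil : ℝ) : ℂ) = ∑ z ∈ filt, (starRingEnd ℂ) (c z) * c z := by
      rw [hCfil]
      push_cast
      exact Finset.sum_congr rfl fun z _ => Complex.normSq_eq_conj_mul_self
    set m' : ℝ := (2 ^ n' * (N : ℝ)) * Q ^ (B - 1) with hm'def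
    have hm'c : ((m' : ℝ) : ℂ) = (2 ^ n' * νc) * q ^ (B - 1) := by
      rw [hm'def, hQdef, hqdef, hνN]; push_cast; ring
    have hsumabs : ∑ x : Blk B n', ‖φ x‖ ^ 2 = m * Creal := by
      apply Complex.ofReal_injective
      have e : ∀ x : Blk B n', ((‖φ x‖ ^ 2 : ℝ) : ℂ)
          = (starRingEnd ℂ) (φ x) * φ x := by
        intro x
        rw [Complex.sq_norm, Complex.normSq_eq_conj_mul_self]
      rw [Complex.ofReal_sum, Finset.sum_congr rfl fun x _ => e x, hA1,
        Complex.ofReal_mul, hmq, hCc]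
    have hDsum : ∑ x : Blk B n', Complex.normSq (φ x - φ (σ x)) = m' * Cfil := by
      apply Complex.ofReal_injective
      have e : ∀ x : Blk B n', ((Complex.normSq (φ x - φ (σ x)) : ℝ) : ℂ)
          = (starRingEnd ℂ) (φ x - φ (σ x)) * (φ x - φ (σ x)) := by
        intro x
        rw [Complex.normSq_eq_conj_mul_self]
      rw [Complex.ofReal_sum, Finset.sum_congr rfl fun x _ => e x, hD1,
        Complex.ofReal_mul, hm'c, hCfc]
    -- the controlled flip: value of the quadratic form
    set Ssum : ℝ := ∑ x ∈ S, Complex.normSq (φ x - φ (σ x)) with hSsumdef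
    have hip : ipB φ (ctrlXB k b j S φ) = ((m * Creal - Ssum / 2 : ℝ) : ℂ) := by
      have hsplitpt : ∀ x, (starRingEnd ℂ) (φ x) * (ctrlXB k b j S φ) x
          = (starRingEnd ℂ) (φ x) * φ x
            + (if x ∈ S then (starRingEnd ℂ) (φ x) * (φ (σ x) - φ x) else 0) := by
        intro x
        simp only [ctrlXB, ← hσ]
        by_cases hx : x ∈ S <;> simp [hx] <;> ring
      have h1 : ipB φ (ctrlXB k b j S φ)
          = (∑ x : Blk B n', (starRingEnd ℂ) (φ x) * φ x)
            + ∑ x ∈ S, (starRingEnd ℂ) (φ x) * (φ (σ x) - φ x) := by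
        rw [ipB, Finset.sum_congr rfl fun x _ => hsplitpt x, Finset.sum_add_distrib]
        congr 1
        rw [Finset.sum_ite_mem, Finset.univ_inter]
      have hinvol : Function.Involutive σ := hinv
      have hTσ : (∑ x ∈ S, (starRingEnd ℂ) (φ x) * (φ (σ x) - φ x))
          = ∑ x ∈ S, (starRingEnd ℂ) (φ (σ x)) * (φ x - φ (σ x)) := by
        refine Finset.sum_equiv hinvol.toPerm (fun x => ?_) (fun x hx => ?_)
        · exact (hS x).symm
        · simp only [Function.Involutive.coe_toPerm]
          rw [hinv x]
      have h2T : (∑ x ∈ S, (starRingEnd ℂ) (φ x) * (φ (σ x) - φ x))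
            + (∑ x ∈ S, (starRingEnd ℂ) (φ x) * (φ (σ x) - φ x))
          = -∑ x ∈ S, (starRingEnd ℂ) (φ x - φ (σ x)) * (φ x - φ (σ x)) := by
        nth_rewrite 2 [hTσ]
        rw [← Finset.sum_add_distrib, ← Finset.sum_neg_distrib]
        refine Finset.sum_congr rfl fun x _ => ?_
        rw [map_sub]
        ring
      have hScast : ((Ssum : ℝ) : ℂ)
          = ∑ x ∈ S, (starRingEnd ℂ) (φ x - φ (σ x)) * (φ x - φ (σ x)) := by
        rw [hSsumdef, Complex.ofReal_sum]
        exact Finset.sum_congr rfl fun x _ => Complex.normSq_eq_conj_mul_self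
      have hipφφ : (∑ x : Blk B n', (starRingEnd ℂ) (φ x) * φ x)
          = ((m * Creal : ℝ) : ℂ) := by
        rw [hA1, Complex.ofReal_mul, hmq, hCc]
      rw [h1, hipφφ]
      have hT : (∑ x ∈ S, (starRingEnd ℂ) (φ x) * (φ (σ x) - φ x))
          = -(((Ssum : ℝ) : ℂ) / 2) := by
        rw [hScast]
        linear_combination h2T / 2
      rw [hT]
      push_cast
      ring
    -- final inequality
    rw [hip, Complex.norm_real, Real.norm_eq_abs, hsumabs]
    have hSnn : 0 ≤ Ssum := Finset.sum_nonneg fun x _ => Complex.normSq_nonneg _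
    have hSle : Ssum ≤ ∑ x : Blk B n', Complex.normSq (φ x - φ (σ x)) :=
      Finset.sum_le_sum_of_subset_of_nonneg (Finset.subset_univ S)
        (fun x _ _ => Complex.normSq_nonneg _)
    have hCfil_le : Cfil ≤ Creal :=
      Finset.sum_le_sum_of_subset_of_nonneg (Finset.filter_subset _ _)
        (fun z _ _ => Complex.normSq_nonneg _)
    have hCfnn : 0 ≤ Cfil := Finset.sum_nonneg fun z _ => Complex.normSq_nonneg _
    have hCnn : 0 ≤ Creal := Finset.sum_nonneg fun z _ => Complex.normSq_nonneg _
    have hN_le : (N : ℝ) ≤ s * 2 ^ n' := by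
      have h6 := hs j
      rw [div_le_iff₀ (by positivity)] at h6
      exact h6
    have hQnn : (0 : ℝ) ≤ Q := by rw [hQdef]; positivity
    have hQpow : (0 : ℝ) ≤ Q ^ (B - 1) := pow_nonneg hQnn _
    have hBpos : 0 < B := k.pos
    have hmQ : m = Q ^ (B - 1) * Q := by
      rw [hmdef, ← pow_succ]
      congr 1
      omega
    have h2nn : (0 : ℝ) < 2 ^ n' := by positivity
    have hm'le : m' ≤ 4 * s * m := by
      rw [hm'def]
      calc (2 ^ n' * (N : ℝ)) * Q ^ (B - 1)
          ≤ (2 ^ n' * (s * 2 ^ n')) * Q ^ (B - 1) := by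
            apply mul_le_mul_of_nonneg_right _ hQpow
            exact mul_le_mul_of_nonneg_left hN_le (le_of_lt h2nn)
        _ = 4 * s * m := by rw [hmQ, hQdef]; ring
    have hm'nn : 0 ≤ m' := by
      rw [hm'def]
      have : (0:ℝ) ≤ (N : ℝ) := Nat.cast_nonneg _
      positivity
    have hSbound : Ssum ≤ 4 * s * m * Creal := by
      calc Ssum ≤ ∑ x : Blk B n', Complex.normSq (φ x - φ (σ x)) := hSle
        _ = m' * Cfil := hDsum
        _ ≤ m' * Creal := mul_le_mul_of_nonneg_left hCfil_le hm'nn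
        _ ≤ (4 * s * m) * Creal := mul_le_mul_of_nonneg_right hm'le hCnn
    calc (1 - 2 * s) * (m * Creal) ≤ m * Creal - Ssum / 2 := by linarith
      _ ≤ |m * Creal - Ssum / 2| := le_abs_self _
end

section
/- Let M be a subspace of ℂ^N of dimension at least 2. Then there exist two orthonormal vectors φ, ψ ∈ M such that Σ_{x} |φ(x)|·|ψ(x)| ≥ 1/2. -/
open scoped BigOperators

lemma stmt8_aux (a b : ℂ) :
    ‖a‖ ^ 2 + ‖b‖ ^ 2 - 2 * (‖a‖ * ‖b‖)
      ≤ ‖a + b‖ * ‖a - b‖ := by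
  have h1 : |‖a‖ - ‖b‖| ≤ ‖a - b‖ := by
    simpa using abs_norm_sub_norm_le a b
  have h2 : |‖a‖ - ‖b‖| ≤ ‖a + b‖ := by
    simpa [sub_neg_eq_add] using abs_norm_sub_norm_le a (-b)
  nlinarith [abs_nonneg (‖a‖ - ‖b‖),
    sq_abs (‖a‖ - ‖b‖)]

lemma stmt8_sq (z : ℂ) : ((‖z‖ ^ 2 : ℝ) : ℂ) = (starRingEnd ℂ) z * z := by
  rw [← Complex.normSq_eq_norm_sq]
  exact Complex.normSq_eq_conj_mul_self

/-- any subspace `M ⊆ ℂ^N` of dimension at least 2 contains two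
orthonormal vectors `φ, ψ` with `∑_x |φ(x)||ψ(x)| ≥ 1/2`. -/
theorem stmt8 {N : Type*} [Fintype N] (M : Submodule ℂ (N → ℂ))
    (h2 : 2 ≤ Module.finrank ℂ M) :
    ∃ φ ∈ M, ∃ ψ ∈ M,
      (∑ x : N, (starRingEnd ℂ) (φ x) * φ x) = 1 ∧
      (∑ x : N, (starRingEnd ℂ) (ψ x) * ψ x) = 1 ∧
      (∑ x : N, (starRingEnd ℂ) (φ x) * ψ x) = 0 ∧
      (1 / 2 : ℝ) ≤ ∑ x : N, ‖φ x‖ * ‖ψ x‖ := by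
  classical
  let M' : Submodule ℂ (EuclideanSpace ℂ N) :=
    M.comap (WithLp.linearEquiv 2 ℂ (N → ℂ) : EuclideanSpace ℂ N →ₗ[ℂ] (N → ℂ))
  have h2' : 2 ≤ Module.finrank ℂ M' := by
    rw [show M' = _ from Submodule.comap_equiv_eq_map_symm _ _, LinearEquiv.finrank_map_eq]
    exact h2
  let b := stdOrthonormalBasis ℂ M'
  have h0 : (0 : ℕ) < Module.finrank ℂ M' := by omega
  have h1 : (1 : ℕ) < Module.finrank ℂ M' := by omega
  let i0 : Fin (Module.finrank ℂ M') := ⟨0, h0⟩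
  let i1 : Fin (Module.finrank ℂ M') := ⟨1, h1⟩
  let e : EuclideanSpace ℂ N := b i0
  let f : EuclideanSpace ℂ N := b i1
  have heM : (e : N → ℂ) ∈ M := (b i0).2
  have hfM : (f : N → ℂ) ∈ M := (b i1).2
  have hb := b.orthonormal
  rw [orthonormal_iff_ite] at hb
  have hip : ∀ i j, (∑ x : N, (starRingEnd ℂ) ((b i : EuclideanSpace ℂ N) x) *
      (b j : EuclideanSpace ℂ N) x) = if i = j then 1 else 0 := by
    intro i j
    have := hb i j
    rw [Submodule.coe_inner] at this
    rw [← this]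
    simp [PiLp.inner_apply, RCLike.inner_apply]
    exact Finset.sum_congr rfl fun x _ => mul_comm _ _
  have hee : (∑ x : N, (starRingEnd ℂ) (e x) * e x) = 1 := by simpa [i0] using hip i0 i0
  have hff : (∑ x : N, (starRingEnd ℂ) (f x) * f x) = 1 := by simpa [i1] using hip i1 i1
  have hef : (∑ x : N, (starRingEnd ℂ) (e x) * f x) = 0 := by
    simpa [i0, i1, Fin.ext_iff] using hip i0 i1
  have hfe : (∑ x : N, (starRingEnd ℂ) (f x) * e x) = 0 := by
    simpa [i0, i1, Fin.ext_iff] using hip i1 i0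
  have he2 : (∑ x : N, ‖e x‖ ^ 2) = 1 := by
    have h : (∑ x : N, ((‖e x‖ ^ 2 : ℝ) : ℂ)) = 1 := by
      rw [← hee]; exact Finset.sum_congr rfl fun x _ => stmt8_sq _
    exact_mod_cast h
  have hf2 : (∑ x : N, ‖f x‖ ^ 2) = 1 := by
    have h : (∑ x : N, ((‖f x‖ ^ 2 : ℝ) : ℂ)) = 1 := by
      rw [← hff]; exact Finset.sum_congr rfl fun x _ => stmt8_sq _
    exact_mod_cast h
  set A : ℝ := ∑ x : N, ‖e x‖ * ‖f x‖ with hA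
  by_cases hcase : (1 / 2 : ℝ) ≤ A
  · exact ⟨e, heM, f, hfM, hee, hff, hef, hcase⟩
  · -- use (e ± f)/√2
    set c : ℂ := ((Real.sqrt 2 : ℝ) : ℂ)⁻¹ with hcdef
    have hs2 : ((Real.sqrt 2 : ℝ) : ℂ) * ((Real.sqrt 2 : ℝ) : ℂ) = 2 := by
      norm_cast
      exact Real.mul_self_sqrt (by norm_num)
    have hc : (starRingEnd ℂ) c * c = 1 / 2 := by
      simp only [hcdef, map_inv₀, Complex.conj_ofReal, ← mul_inv]
      rw [hs2]
      norm_num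
    set φ : N → ℂ := fun x => c * (e x + f x) with hφdef
    set ψ : N → ℂ := fun x => c * (e x - f x) with hψdef
    have hφM : φ ∈ M := M.smul_mem c (M.add_mem heM hfM)
    have hψM : ψ ∈ M := M.smul_mem c (M.sub_mem heM hfM)
    have expand1 : ∀ x, (starRingEnd ℂ) (φ x) * φ x =
        (1/2 : ℂ) * ((starRingEnd ℂ) (e x) * e x) + (1/2) * ((starRingEnd ℂ) (e x) * f x)
        + (1/2) * ((starRingEnd ℂ) (f x) * e x) + (1/2) * ((starRingEnd ℂ) (f x) * f x) := by
      intro x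
      have : (starRingEnd ℂ) (φ x) * φ x = ((starRingEnd ℂ) c * c) *
          (((starRingEnd ℂ) (e x) + (starRingEnd ℂ) (f x)) * (e x + f x)) := by
        simp only [hφdef, map_mul, map_add]; ring
      rw [this, hc]; ring
    have expand2 : ∀ x, (starRingEnd ℂ) (ψ x) * ψ x =
        (1/2 : ℂ) * ((starRingEnd ℂ) (e x) * e x) - (1/2) * ((starRingEnd ℂ) (e x) * f x)
        - (1/2) * ((starRingEnd ℂ) (f x) * e x) + (1/2) * ((starRingEnd ℂ) (f x) * f x) := by
      intro x
      have : (starRingEnd ℂ) (ψ x) * ψ x = ((starRingEnd ℂ) c * c) *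
          (((starRingEnd ℂ) (e x) - (starRingEnd ℂ) (f x)) * (e x - f x)) := by
        simp only [hψdef, map_mul, map_sub]; ring
      rw [this, hc]; ring
    have expand3 : ∀ x, (starRingEnd ℂ) (φ x) * ψ x =
        (1/2 : ℂ) * ((starRingEnd ℂ) (e x) * e x) - (1/2) * ((starRingEnd ℂ) (e x) * f x)
        + (1/2) * ((starRingEnd ℂ) (f x) * e x) - (1/2) * ((starRingEnd ℂ) (f x) * f x) := by
      intro x
      have : (starRingEnd ℂ) (φ x) * ψ x = ((starRingEnd ℂ) c * c) *
          (((starRingEnd ℂ) (e x) + (starRingEnd ℂ) (f x)) * (e x - f x)) := by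
        simp only [hφdef, hψdef, map_mul, map_add]; ring
      rw [this, hc]; ring
    have hφφ : (∑ x : N, (starRingEnd ℂ) (φ x) * φ x) = 1 := by
      rw [Finset.sum_congr rfl fun x _ => expand1 x]
      simp only [Finset.sum_add_distrib, ← Finset.mul_sum]
      rw [hee, hef, hfe, hff]; norm_num
    have hψψ : (∑ x : N, (starRingEnd ℂ) (ψ x) * ψ x) = 1 := by
      rw [Finset.sum_congr rfl fun x _ => expand2 x]
      simp only [Finset.sum_add_distrib, Finset.sum_sub_distrib, ← Finset.mul_sum]
      rw [hee, hef, hfe, hff]; norm_num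
    have hφψ : (∑ x : N, (starRingEnd ℂ) (φ x) * ψ x) = 0 := by
      rw [Finset.sum_congr rfl fun x _ => expand3 x]
      simp only [Finset.sum_add_distrib, Finset.sum_sub_distrib, ← Finset.mul_sum]
      rw [hee, hef, hfe, hff]; norm_num
    have hcabs : ‖c‖ = (Real.sqrt 2)⁻¹ := by
      simp [hcdef, norm_inv, Complex.norm_real, abs_of_nonneg (Real.sqrt_nonneg 2)]
    have h2s : (Real.sqrt 2)⁻¹ * (Real.sqrt 2)⁻¹ = 1 / 2 := by
      rw [← mul_inv, Real.mul_self_sqrt (by norm_num)]; norm_num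
    have habs : ∀ x, ‖φ x‖ * ‖ψ x‖ =
        (1/2 : ℝ) * (‖e x + f x‖ * ‖e x - f x‖) := by
      intro x
      simp only [hφdef, hψdef, norm_mul, hcabs]
      calc (Real.sqrt 2)⁻¹ * ‖e x + f x‖ * ((Real.sqrt 2)⁻¹ * ‖e x - f x‖)
          = ((Real.sqrt 2)⁻¹ * (Real.sqrt 2)⁻¹) * (‖e x + f x‖ * ‖e x - f x‖) := by ring
        _ = (1/2 : ℝ) * (‖e x + f x‖ * ‖e x - f x‖) := by rw [h2s]
    have hsum : (∑ x : N, ‖φ x‖ * ‖ψ x‖) =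
        (1/2 : ℝ) * ∑ x : N, ‖e x + f x‖ * ‖e x - f x‖ := by
      rw [Finset.sum_congr rfl fun x _ => habs x, ← Finset.mul_sum]
    have hge : (∑ x : N, (‖e x‖ ^ 2 + ‖f x‖ ^ 2
        - 2 * (‖e x‖ * ‖f x‖)))
        ≤ ∑ x : N, ‖e x + f x‖ * ‖e x - f x‖ :=
      Finset.sum_le_sum fun x _ => stmt8_aux (e x) (f x)
    have hval : (∑ x : N, (‖e x‖ ^ 2 + ‖f x‖ ^ 2
        - 2 * (‖e x‖ * ‖f x‖))) = 2 - 2 * A := by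
      simp only [Finset.sum_add_distrib, Finset.sum_sub_distrib, ← Finset.mul_sum]
      rw [he2, hf2, ← hA]
      ring
    refine ⟨φ, hφM, ψ, hψM, hφφ, hψψ, hφψ, ?_⟩
    rw [hsum]
    rw [hval] at hge
    linarith
end

section
/- Let φ, ψ ∈ ℂ^N be orthonormal vectors and set φ' = (φ+ψ)/√2, ψ' = (φ−ψ)/√2. Then φ', ψ' are orthonormal and Σ_x |φ'(x)|·|ψ'(x)| ≥ 1 − Σ_x |φ(x)|·|ψ(x)|. In particular max(Σ_x |φ(x)||ψ(x)|, Σ_x |φ'(x)||ψ'(x)|) ≥ 1/2. -/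
open scoped BigOperators

/-- if `φ, ψ` are orthonormal and `φ' = (φ+ψ)/√2`, `ψ' = (φ-ψ)/√2`,
then `φ', ψ'` are orthonormal, `∑|φ'||ψ'| ≥ 1 - ∑|φ||ψ|`, and consequently one of
the two overlap sums is at least `1/2`. -/
theorem stmt10 {N : Type*} [Fintype N] (φ ψ φ' ψ' : N → ℂ)
    (hφ : (∑ x : N, (starRingEnd ℂ) (φ x) * φ x) = 1)
    (hψ : (∑ x : N, (starRingEnd ℂ) (ψ x) * ψ x) = 1)
    (hortho : (∑ x : N, (starRingEnd ℂ) (φ x) * ψ x) = 0)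
    (hφ' : φ' = fun x => (φ x + ψ x) / Real.sqrt 2)
    (hψ' : ψ' = fun x => (φ x - ψ x) / Real.sqrt 2) :
    (∑ x : N, (starRingEnd ℂ) (φ' x) * φ' x) = 1 ∧
    (∑ x : N, (starRingEnd ℂ) (ψ' x) * ψ' x) = 1 ∧
    (∑ x : N, (starRingEnd ℂ) (φ' x) * ψ' x) = 0 ∧
    1 - (∑ x : N, ‖φ x‖ * ‖ψ x‖) ≤
      ∑ x : N, ‖φ' x‖ * ‖ψ' x‖ ∧
    (1 / 2 : ℝ) ≤ max (∑ x : N, ‖φ x‖ * ‖ψ x‖)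
      (∑ x : N, ‖φ' x‖ * ‖ψ' x‖) := by
  subst hφ' hψ'
  have hs : ((Real.sqrt 2 : ℝ) : ℂ) * ((Real.sqrt 2 : ℝ) : ℂ) = 2 := by
    norm_cast
    rw [Real.mul_self_sqrt] <;> norm_num
  have horth2 : (∑ x : N, (starRingEnd ℂ) (ψ x) * φ x) = 0 := by
    have := congrArg (starRingEnd ℂ) hortho
    simpa [map_sum, mul_comm] using this
  have hterm : ∀ a b : ℂ,
      (starRingEnd ℂ) (a / (Real.sqrt 2 : ℝ)) * (b / (Real.sqrt 2 : ℝ))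
        = (starRingEnd ℂ) a * b / 2 := by
    intro a b
    rw [map_div₀, Complex.conj_ofReal, div_mul_div_comm, hs]
  have h1 : (∑ x : N, (starRingEnd ℂ) ((φ x + ψ x) / (Real.sqrt 2 : ℝ)) *
      ((φ x + ψ x) / (Real.sqrt 2 : ℝ))) = 1 := by
    simp only [hterm, map_add, add_mul, mul_add, add_div, Finset.sum_add_distrib,
      ← Finset.sum_div, hφ, hψ, hortho, horth2]
    norm_num
  have h2 : (∑ x : N, (starRingEnd ℂ) ((φ x - ψ x) / (Real.sqrt 2 : ℝ)) *
      ((φ x - ψ x) / (Real.sqrt 2 : ℝ))) = 1 := by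
    simp only [hterm, map_sub, sub_mul, mul_sub, sub_div, Finset.sum_sub_distrib,
      ← Finset.sum_div, hφ, hψ, hortho, horth2]
    norm_num
  have h3 : (∑ x : N, (starRingEnd ℂ) ((φ x + ψ x) / (Real.sqrt 2 : ℝ)) *
      ((φ x - ψ x) / (Real.sqrt 2 : ℝ))) = 0 := by
    simp only [hterm, map_add, add_mul, mul_sub, sub_div, add_div, Finset.sum_sub_distrib,
      Finset.sum_add_distrib, ← Finset.sum_div, hφ, hψ, hortho, horth2]
    norm_num
  -- real norms
  have habs : ∀ f : N → ℂ, (∑ x : N, (starRingEnd ℂ) (f x) * f x) = 1 →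
      (∑ x : N, ‖f x‖ ^ 2) = 1 := by
    intro f hf
    have : ((∑ x : N, ‖f x‖ ^ 2 : ℝ) : ℂ) = 1 := by
      push_cast
      rw [← hf]
      refine Finset.sum_congr rfl fun x _ => ?_
      rw [mul_comm, Complex.mul_conj, Complex.normSq_eq_norm_sq]
      push_cast; ring
    exact_mod_cast this
  have hφa := habs φ hφ
  have hψa := habs ψ hψ
  have hsqrt2 : Real.sqrt 2 > 0 := by positivity
  have hkey : 1 - (∑ x : N, ‖φ x‖ * ‖ψ x‖) ≤
      ∑ x : N, ‖(φ x + ψ x) / (Real.sqrt 2 : ℝ)‖ *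
        ‖(φ x - ψ x) / (Real.sqrt 2 : ℝ)‖ := by
    have hpt : ∀ x : N, (‖φ x‖ ^ 2 + ‖ψ x‖ ^ 2) / 2
        - ‖φ x‖ * ‖ψ x‖ ≤
        ‖(φ x + ψ x) / (Real.sqrt 2 : ℝ)‖ *
          ‖(φ x - ψ x) / (Real.sqrt 2 : ℝ)‖ := by
      intro x
      set a := φ x; set b := ψ x
      have hd : ‖((Real.sqrt 2 : ℝ) : ℂ)‖ = Real.sqrt 2 := by
        rw [Complex.norm_real, Real.norm_eq_abs, abs_of_pos hsqrt2]
      have e : ‖(a + b) / (Real.sqrt 2 : ℝ)‖ *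
          ‖(a - b) / (Real.sqrt 2 : ℝ)‖
          = ‖a + b‖ * ‖a - b‖ / 2 := by
        rw [norm_div, norm_div, hd, div_mul_div_comm, Real.mul_self_sqrt (by norm_num)]
      rw [e]
      have hab : |‖a‖ - ‖b‖| ≤ ‖a - b‖ :=
        abs_norm_sub_norm_le a b
      have hab' : |‖a‖ - ‖b‖| ≤ ‖a + b‖ := by
        have := abs_norm_sub_norm_le a (-b)
        simpa [sub_neg_eq_add] using this
      have hsq : (‖a‖ - ‖b‖) ^ 2 ≤
          ‖a + b‖ * ‖a - b‖ := by
        calc (‖a‖ - ‖b‖) ^ 2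
            = |‖a‖ - ‖b‖| * |‖a‖ - ‖b‖| := by
              rw [← sq_abs, sq]
          _ ≤ ‖a + b‖ * ‖a - b‖ :=
              mul_le_mul hab' hab (abs_nonneg _) (norm_nonneg _)
      nlinarith [hsq]
    calc 1 - (∑ x : N, ‖φ x‖ * ‖ψ x‖)
        = ∑ x : N, ((‖φ x‖ ^ 2 + ‖ψ x‖ ^ 2) / 2
            - ‖φ x‖ * ‖ψ x‖) := by
          rw [Finset.sum_sub_distrib, ← Finset.sum_div, Finset.sum_add_distrib, hφa, hψa]
          ring
      _ ≤ _ := Finset.sum_le_sum fun x _ => hpt x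
  refine ⟨h1, h2, h3, hkey, ?_⟩
  rcases le_or_gt (1/2 : ℝ) (∑ x : N, ‖φ x‖ * ‖ψ x‖) with h | h
  · exact le_max_of_le_left h
  · refine le_max_of_le_right ?_
    linarith
end
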